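/- Let I ⊆ ℚ[X] = ℚ[x₁,…,x_n] be a zero-dimensional ideal, and for i = 1,…,n let fᵢ ∈ ℚ[xᵢ] be a generator of the elimination ideal, i.e. ⟨fᵢ⟩ = I ∩ ℚ[xᵢ]. Let gᵢ be the squarefree part of fᵢ. Then √I = I + ⟨g₁,…,g_n⟩. -/

import Mathlib

open MvPolynomial

set_option maxHeartbeats 1000000 in
set_option synthInstance.maxHeartbeats 400000 in
/-- **Proposition (Krick–Logar).** Let `I ⊆ ℚ[x₁,…,xₙ]` be a zero-dimensional ideal and
`⟨fᵢ⟩ = I ∩ ℚ[xᵢ]` for `i = 1,…,n`. If `gᵢ` is the squarefree part of `fᵢ` (characterized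
up to a constant by: `gᵢ` squarefree, `gᵢ ∣ fᵢ` and `fᵢ ∣ gᵢᵏ` for some `k`), then
`√I = I + ⟨g₁,…,gₙ⟩`. -/
theorem statement5 (n : ℕ) (I : Ideal (MvPolynomial (Fin n) ℚ))
    (hfin : Module.Finite ℚ (MvPolynomial (Fin n) ℚ ⧸ I))
    (f g : Fin n → Polynomial ℚ)
    (hf : ∀ i, Ideal.comap (Polynomial.aeval (X i : MvPolynomial (Fin n) ℚ)) I
      = Ideal.span {f i})
    (hg_sqfree : ∀ i, Squarefree (g i))
    (hg_dvd : ∀ i, g i ∣ f i)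
    (hg_rad : ∀ i, ∃ k : ℕ, f i ∣ g i ^ k) :
    I.radical = I ⊔ Ideal.span
      (Set.range fun i : Fin n => Polynomial.aeval (X i : MvPolynomial (Fin n) ℚ) (g i)) := by
  set J : Ideal (MvPolynomial (Fin n) ℚ) := I ⊔ Ideal.span
      (Set.range fun i : Fin n => Polynomial.aeval (X i : MvPolynomial (Fin n) ℚ) (g i)) with hJ
  have hfI : ∀ i, Polynomial.aeval (X i : MvPolynomial (Fin n) ℚ) (f i) ∈ I := by
    intro i
    have : f i ∈ Ideal.comap (Polynomial.aeval (X i : MvPolynomial (Fin n) ℚ)) I := by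
      rw [hf i]; exact Ideal.subset_span rfl
    exact this
  have hJle : J ≤ I.radical := by
    refine sup_le Ideal.le_radical (Ideal.span_le.mpr ?_)
    rintro _ ⟨i, rfl⟩
    obtain ⟨k, c, hc⟩ := hg_rad i
    refine ⟨k, ?_⟩
    have : Polynomial.aeval (X i : MvPolynomial (Fin n) ℚ) (g i) ^ k
        = Polynomial.aeval (X i : MvPolynomial (Fin n) ℚ) (f i)
          * Polynomial.aeval (X i : MvPolynomial (Fin n) ℚ) c := by
      rw [← map_mul, ← hc, map_pow]
    rw [this]
    exact Ideal.mul_mem_right _ _ (hfI i)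
  have hmk : ∀ i, Polynomial.aeval (Ideal.Quotient.mk J (X i)) (g i) = 0 := by
    intro i
    have h1 := Polynomial.aeval_algHom_apply (Ideal.Quotient.mkₐ ℚ J)
      (X i : MvPolynomial (Fin n) ℚ) (g i)
    have h2 : Polynomial.aeval (X i : MvPolynomial (Fin n) ℚ) (g i) ∈ J :=
      le_sup_right (α := Ideal (MvPolynomial (Fin n) ℚ)) (Ideal.subset_span ⟨i, rfl⟩)
    rw [Ideal.Quotient.mkₐ_eq_mk, Ideal.Quotient.eq_zero_iff_mem.mpr h2] at h1
    exact h1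
  have hD : ∀ x : MvPolynomial (Fin n) ℚ ⧸ J,
      (KaehlerDifferential.D ℚ (MvPolynomial (Fin n) ℚ ⧸ J)) x = 0 := by
    intro x
    have hrange : (Set.range fun i => Ideal.Quotient.mk J (X i))
        = (Ideal.Quotient.mkₐ ℚ J) '' (Set.range (X : Fin n → MvPolynomial (Fin n) ℚ)) := by
      rw [← Set.range_comp]; rfl
    have htop : Algebra.adjoin ℚ (Set.range fun i => Ideal.Quotient.mk J (X i)) = ⊤ := by
      rw [hrange, ← AlgHom.map_adjoin, MvPolynomial.adjoin_range_X, Algebra.map_top,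
        (AlgHom.range_eq_top _).mpr (Ideal.Quotient.mkₐ_surjective ℚ J)]
    have hx : x ∈ Algebra.adjoin ℚ (Set.range fun i => Ideal.Quotient.mk J (X i)) := by
      rw [htop]; trivial
    induction hx using Algebra.adjoin_induction with
    | mem a ha =>
      obtain ⟨i, rfl⟩ := ha
      have hsep : (g i).Separable := PerfectField.separable_iff_squarefree.mpr (hg_sqfree i)
      obtain ⟨u, v, huv⟩ := hsep
      have hunit : IsUnit (Polynomial.aeval (Ideal.Quotient.mk J (X i))
          (Polynomial.derivative (g i))) := by
        refine IsUnit.of_mul_eq_one (Polynomial.aeval (Ideal.Quotient.mk J (X i)) v) ?_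
        have := congrArg (Polynomial.aeval (Ideal.Quotient.mk J (X i))) huv
        simpa [map_add, map_mul, map_one, hmk i, mul_comm] using this
      have h0 : Polynomial.aeval (Ideal.Quotient.mk J (X i)) (Polynomial.derivative (g i)) •
          (KaehlerDifferential.D ℚ (MvPolynomial (Fin n) ℚ ⧸ J)) (Ideal.Quotient.mk J (X i))
          = 0 := by
        rw [← Derivation.map_aeval, hmk i, map_zero]
      obtain ⟨w, hw⟩ := hunit
      have : (KaehlerDifferential.D ℚ (MvPolynomial (Fin n) ℚ ⧸ J)) (Ideal.Quotient.mk J (X i))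
          = (↑w⁻¹ : MvPolynomial (Fin n) ℚ ⧸ J) •
            ((w : MvPolynomial (Fin n) ℚ ⧸ J) •
              (KaehlerDifferential.D ℚ (MvPolynomial (Fin n) ℚ ⧸ J)) (Ideal.Quotient.mk J (X i)))
          := by rw [← mul_smul (α := MvPolynomial (Fin n) ℚ ⧸ J) (β := Ω[(MvPolynomial (Fin n) ℚ ⧸ J)⁄ℚ])]; simp
      rw [this, hw, h0, smul_zero (M := MvPolynomial (Fin n) ℚ ⧸ J) (A := Ω[(MvPolynomial (Fin n) ℚ ⧸ J)⁄ℚ])]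
    | algebraMap r => exact Derivation.map_algebraMap _ r
    | add a b _ _ ha hb => rw [map_add, ha, hb, add_zero]
    | mul a b _ _ ha hb => rw [Derivation.leibniz, ha, hb, smul_zero, smul_zero, add_zero]
  have hsub : Subsingleton (Ω[(MvPolynomial (Fin n) ℚ ⧸ J)⁄ℚ]) := by
    have h1 : (⊤ : Submodule (MvPolynomial (Fin n) ℚ ⧸ J)
        (Ω[(MvPolynomial (Fin n) ℚ ⧸ J)⁄ℚ])) = ⊥ := by
      rw [← KaehlerDifferential.span_range_derivation]
      refine le_antisymm (Submodule.span_le.mpr ?_) bot_le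
      rintro _ ⟨x, rfl⟩
      simp [hD x]
    refine subsingleton_of_forall_eq 0 fun ω => ?_
    have h2 : ω ∈ (⊤ : Submodule (MvPolynomial (Fin n) ℚ ⧸ J)
        (Ω[(MvPolynomial (Fin n) ℚ ⧸ J)⁄ℚ])) := trivial
    rw [h1] at h2
    simpa using h2
  have hunr : Algebra.FormallyUnramified ℚ (MvPolynomial (Fin n) ℚ ⧸ J) := ⟨hsub⟩
  have hred : IsReduced (MvPolynomial (Fin n) ℚ ⧸ J) :=
    Algebra.FormallyUnramified.isReduced_of_field ℚ _
  have hrad : J.IsRadical := (Ideal.isRadical_iff_quotient_reduced J).mpr hred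
  refine le_antisymm ?_ hJle
  have : I.radical ≤ J.radical := Ideal.radical_mono le_sup_left
  rwa [hrad.radical] at this
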